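/- arXiv:1509.02143 — 3 statements merged into one kernel-verified Lean document; each statement's English description precedes it below -/
import Mathlib

section
/- Let G be a totally ordered graph and let k and r be integers with 1 ≤ k < r. Then every monotone path in G of length k and height r can be extended (by appending one vertex at its final endpoint) to a monotone path of length k+1 whose height is at least r − k. -/
open scoped Classical

namespace AltitudePaper

variable {V : Type*} [Fintype V]

/-- The list of cells `(i, u)` (row `i`, column `u`), rows `1..N`, in the order
they are filled: by row, then by the vertex (column) order. -/
noncomputable def cellList (ov : LinearOrder V) (N : ℕ) : List (ℕ × V) :=
  letI := ov
  (List.range N).flatMap fun i => ((Finset.univ : Finset V).sort (· ≤ ·)).map fun u => (i + 1, u)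

/-- The largest (in the edge order `oe`) edge of `G` incident to `u` not among `used`. -/
noncomputable def pick (G : SimpleGraph V) (oe : LinearOrder (Sym2 V)) (u : V)
    (used : Finset (Sym2 V)) : Option (Sym2 V) :=
  letI := oe
  ((Finset.univ : Finset (Sym2 V)).filter fun e => e ∈ G.edgeSet ∧ u ∈ e ∧ e ∉ used).max

/-- Fill the given list of cells in order, greedily placing at each cell `(i,u)` the
largest unused edge incident to `u`. -/
noncomputable def tableAux (G : SimpleGraph V) (oe : LinearOrder (Sym2 V)) :
    List (ℕ × V) → Finset (Sym2 V) → (ℕ × V) → Option (Sym2 V)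
  | [], _, _ => none
  | c :: rest, used, β =>
    match pick G oe c.2 used with
    | none => if β = c then none else tableAux G oe rest used β
    | some e => if β = c then some e else tableAux G oe rest (insert e used) β

/-- The height table of the totally ordered graph `(G, ov, oe)`:  cells `(i,u)` with
`i` a positive integer (row) and `u` a vertex (column) are filled in order (by row,
then by column order), each cell receiving the largest edge incident to its column
not appearing in an earlier cell (and left empty if there is none). -/
noncomputable def heightTable (G : SimpleGraph V) (ov : LinearOrder V)
    (oe : LinearOrder (Sym2 V)) : ℕ × V → Option (Sym2 V) :=
  tableAux G oe (cellList ov (Fintype.card (Sym2 V))) ∅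

/-- The height `h_G(e)` of an edge `e`: the index of the row of the height table
containing `e`. -/
noncomputable def edgeHeight (G : SimpleGraph V) (ov : LinearOrder V)
    (oe : LinearOrder (Sym2 V)) (e : Sym2 V) : ℕ :=
  sSup {i | ∃ u, heightTable G ov oe (i, u) = some e}

/-- A monotone path in the edge-ordered graph `(G, oe)`: a path traversing its
edges in increasing order of the edge ordering. -/
def IsMonotonePath (G : SimpleGraph V) (oe : LinearOrder (Sym2 V)) {u v : V}
    (p : G.Walk u v) : Prop :=
  p.IsPath ∧ List.Chain' (fun e f => oe.lt e f) p.edges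

/-- The height of a (nontrivial) monotone path: the height of its last edge. -/
noncomputable def pathHeight (G : SimpleGraph V) (ov : LinearOrder V)
    (oe : LinearOrder (Sym2 V)) {u v : V} (p : G.Walk u v) : ℕ :=
  (p.edges.getLast?.map (edgeHeight G ov oe)).getD 0


section Aux

variable (G : SimpleGraph V) (oe : LinearOrder (Sym2 V))

lemma pick_eq_some {u : V} {used : Finset (Sym2 V)} {e : Sym2 V}
    (h : pick G oe u used = some e) : e ∈ G.edgeSet ∧ u ∈ e ∧ e ∉ used := by
  letI := oe
  simp only [pick] at h
  have := Finset.mem_of_max h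
  simpa using this

lemma le_pick {u : V} {used : Finset (Sym2 V)} {e f : Sym2 V}
    (he : e ∈ G.edgeSet) (hue : u ∈ e) (hu : e ∉ used)
    (h : pick G oe u used = some f) : oe.le e f := by
  letI := oe
  letI : PartialOrder (Sym2 V) := oe.toPartialOrder
  simp only [pick] at h
  have hmem : e ∈ (Finset.univ : Finset (Sym2 V)).filter
      (fun e => e ∈ G.edgeSet ∧ u ∈ e ∧ e ∉ used) := by
    simp [he, hue, hu]
  have := Finset.le_max hmem
  rw [h] at this
  exact WithBot.coe_le_coe.mp this

lemma pick_ne_none {u : V} {used : Finset (Sym2 V)} {e : Sym2 V}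
    (he : e ∈ G.edgeSet) (hue : u ∈ e) (hu : e ∉ used) :
    pick G oe u used ≠ none := by
  letI := oe
  letI : PartialOrder (Sym2 V) := oe.toPartialOrder
  intro h
  simp only [pick] at h
  have hmem : e ∈ (Finset.univ : Finset (Sym2 V)).filter
      (fun e => e ∈ G.edgeSet ∧ u ∈ e ∧ e ∉ used) := by
    simp [he, hue, hu]
  have := Finset.le_max hmem
  rw [h] at this
  exact WithBot.not_coe_le_bot e this

lemma tableAux_not_mem_used {l : List (ℕ × V)} {used : Finset (Sym2 V)} {β : ℕ × V}
    {e : Sym2 V} (h : tableAux G oe l used β = some e) : e ∉ used := by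
  induction l generalizing used with
  | nil => simp [tableAux] at h
  | cons c rest ih =>
    cases hp : pick G oe c.2 used with
    | none =>
      simp only [tableAux, hp] at h
      by_cases hb : β = c
      · simp [hb] at h
      · rw [if_neg hb] at h; exact ih h
    | some f =>
      simp only [tableAux, hp] at h
      by_cases hb : β = c
      · rw [if_pos hb] at h
        obtain rfl : f = e := Option.some.inj h
        exact (pick_eq_some G oe hp).2.2
      · rw [if_neg hb] at h
        exact fun hm => ih h (Finset.mem_insert_of_mem hm)

lemma tableAux_mem {l : List (ℕ × V)} {used : Finset (Sym2 V)} {β : ℕ × V}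
    {e : Sym2 V} (h : tableAux G oe l used β = some e) :
    e ∈ G.edgeSet ∧ β.2 ∈ e := by
  induction l generalizing used with
  | nil => simp [tableAux] at h
  | cons c rest ih =>
    cases hp : pick G oe c.2 used with
    | none =>
      simp only [tableAux, hp] at h
      by_cases hb : β = c
      · simp [hb] at h
      · rw [if_neg hb] at h; exact ih h
    | some f =>
      simp only [tableAux, hp] at h
      by_cases hb : β = c
      · rw [if_pos hb] at h
        obtain rfl : f = e := Option.some.inj h
        obtain ⟨h1, h2, _⟩ := pick_eq_some G oe hp
        exact ⟨h1, hb ▸ h2⟩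
      · rw [if_neg hb] at h; exact ih h

lemma tableAux_mem_list {l : List (ℕ × V)} {used : Finset (Sym2 V)} {β : ℕ × V}
    {e : Sym2 V} (h : tableAux G oe l used β = some e) : β ∈ l := by
  induction l generalizing used with
  | nil => simp [tableAux] at h
  | cons c rest ih =>
    by_cases hb : β = c
    · simp [hb]
    · cases hp : pick G oe c.2 used with
      | none =>
        simp only [tableAux, hp, if_neg hb] at h
        exact List.mem_cons_of_mem _ (ih h)
      | some f =>
        simp only [tableAux, hp, if_neg hb] at h
        exact List.mem_cons_of_mem _ (ih h)

lemma tableAux_unique {l : List (ℕ × V)} {used : Finset (Sym2 V)} {β β' : ℕ × V}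
    {e : Sym2 V} (h : tableAux G oe l used β = some e)
    (h' : tableAux G oe l used β' = some e) : β = β' := by
  induction l generalizing used with
  | nil => simp [tableAux] at h
  | cons c rest ih =>
    cases hp : pick G oe c.2 used with
    | none =>
      simp only [tableAux, hp] at h h'
      by_cases hb : β = c
      · simp [hb] at h
      · by_cases hb' : β' = c
        · simp [hb'] at h'
        · rw [if_neg hb] at h; rw [if_neg hb'] at h'; exact ih h h'
    | some f =>
      simp only [tableAux, hp] at h h'
      by_cases hb : β = c
      · by_cases hb' : β' = c
        · rw [hb, hb']
        · rw [if_pos hb] at h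
          obtain rfl : f = e := Option.some.inj h
          rw [if_neg hb'] at h'
          exact absurd (Finset.mem_insert_self f used)
            (tableAux_not_mem_used G oe h')
      · by_cases hb' : β' = c
        · rw [if_pos hb'] at h'
          obtain rfl : f = e := Option.some.inj h'
          rw [if_neg hb] at h
          exact absurd (Finset.mem_insert_self f used)
            (tableAux_not_mem_used G oe h)
        · rw [if_neg hb] at h; rw [if_neg hb'] at h'; exact ih h h'

lemma tableAux_lt {l : List (ℕ × V)} {used : Finset (Sym2 V)} {β β' : ℕ × V}
    {e : Sym2 V} (hl : l.Pairwise fun a b => a.1 ≤ b.1)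
    (h' : tableAux G oe l used β' = some e) (hβ : β ∈ l) (hlt : β.1 < β'.1)
    (hye : β.2 ∈ e) :
    ∃ f, tableAux G oe l used β = some f ∧ oe.lt e f := by
  letI := oe
  induction l generalizing used with
  | nil => simp at hβ
  | cons c rest ih =>
    by_cases hb : β = c
    · subst hb
      have hb' : β' ≠ β := fun h => by rw [h] at hlt; exact lt_irrefl _ hlt
      have henu : e ∉ used := tableAux_not_mem_used G oe h'
      have hee : e ∈ G.edgeSet := (tableAux_mem G oe h').1
      cases hp : pick G oe β.2 used with
      | none => exact absurd hp (pick_ne_none G oe hee hye henu)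
      | some f =>
        simp only [tableAux, hp, if_neg hb'] at h'
        have hle : oe.le e f := le_pick G oe hee hye henu hp
        have hnef : e ≠ f := by
          intro h
          exact tableAux_not_mem_used G oe h' (h ▸ Finset.mem_insert_self f used)
        refine ⟨f, ?_, @lt_of_le_of_ne _ oe.toPartialOrder _ _ hle hnef⟩
        simp [tableAux, hp]
    · have hβr : β ∈ rest := (List.mem_cons.mp hβ).resolve_left hb
      have hc1 : c.1 ≤ β.1 := (List.pairwise_cons.mp hl).1 β hβr
      have hb' : β' ≠ c := by
        intro h
        rw [h] at hlt
        omega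
      cases hp : pick G oe c.2 used with
      | none =>
        simp only [tableAux, hp, if_neg hb'] at h'
        obtain ⟨f, hf, hlt'⟩ := ih (List.pairwise_cons.mp hl).2 h' hβr
        exact ⟨f, by simp only [tableAux, hp, if_neg hb]; exact hf, hlt'⟩
      | some g =>
        simp only [tableAux, hp, if_neg hb'] at h'
        obtain ⟨f, hf, hlt'⟩ := ih (List.pairwise_cons.mp hl).2 h' hβr
        exact ⟨f, by simp only [tableAux, hp, if_neg hb]; exact hf, hlt'⟩

lemma cellList_pairwise (ov : LinearOrder V) (N : ℕ) :
    (cellList ov N).Pairwise fun a b => a.1 ≤ b.1 := by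
  letI := ov
  rw [cellList, List.pairwise_flatMap]
  constructor
  · intro i _
    rw [List.pairwise_map]
    exact List.pairwise_iff_forall_sublist.mpr fun _ => le_refl _
  · refine List.pairwise_lt_range.imp ?_
    intro a b hab x hx z hz
    simp only [List.mem_map] at hx hz
    obtain ⟨u, _, rfl⟩ := hx
    obtain ⟨v, _, rfl⟩ := hz
    simpa using Nat.succ_le_succ hab.le

lemma mem_cellList {ov : LinearOrder V} {N i : ℕ} {u : V} :
    (i, u) ∈ cellList ov N ↔ 1 ≤ i ∧ i ≤ N := by
  letI := ov
  simp only [cellList, List.mem_flatMap, List.mem_map, List.mem_range]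
  constructor
  · rintro ⟨j, hj, v, hv, h⟩
    obtain ⟨h1, h2⟩ := Prod.mk_inj.mp h
    omega
  · rintro ⟨h1, h2⟩
    exact ⟨i - 1, by omega, u, by simp, by rw [Prod.mk.injEq]; exact ⟨by omega, rfl⟩⟩

lemma heightTable_unique (ov : LinearOrder V) {i i' : ℕ} {u u' : V} {e : Sym2 V}
    (h : heightTable G ov oe (i, u) = some e)
    (h' : heightTable G ov oe (i', u') = some e) : i = i' :=
  congrArg Prod.fst (tableAux_unique G oe h h')

lemma edgeHeight_eq (ov : LinearOrder V) {i : ℕ} {u : V} {e : Sym2 V}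
    (h : heightTable G ov oe (i, u) = some e) :
    edgeHeight G ov oe e = i := by
  have hset : {j | ∃ v, heightTable G ov oe (j, v) = some e} = {i} := by
    ext j
    simp only [Set.mem_setOf_eq, Set.mem_singleton_iff]
    constructor
    · rintro ⟨v, hv⟩; exact heightTable_unique G oe ov hv h
    · rintro rfl; exact ⟨u, h⟩
  rw [edgeHeight, hset, csSup_singleton]

lemma exists_heightTable_of_edgeHeight (ov : LinearOrder V) {e : Sym2 V} {r : ℕ}
    (h : edgeHeight G ov oe e = r) (hr : 0 < r) :
    ∃ u, heightTable G ov oe (r, u) = some e := by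
  set S := {j | ∃ v, heightTable G ov oe (j, v) = some e} with hS
  have hbdd : BddAbove S := by
    refine ⟨Fintype.card (Sym2 V), ?_⟩
    rintro j ⟨v, hv⟩
    exact (mem_cellList.mp (tableAux_mem_list G oe hv)).2
  have hne : S.Nonempty := by
    by_contra hcon
    rw [Set.not_nonempty_iff_eq_empty] at hcon
    rw [edgeHeight, ← hS, hcon, csSup_empty] at h
    simp at h
    omega
  have hmem := Nat.sSup_mem hne hbdd
  rw [edgeHeight, ← hS] at h
  rw [h] at hmem
  exact hmem

theorem monotone_path_extension' (ov : LinearOrder V) {x y : V} (p : G.Walk x y)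
    (k r : ℕ) (hk : 1 ≤ k) (hkr : k < r)
    (hmono : IsMonotonePath G oe p) (hlen : p.length = k)
    (hht : pathHeight G ov oe p = r) :
    ∃ (z : V) (h : G.Adj y z),
      IsMonotonePath G oe (p.concat h) ∧ (p.concat h).length = k + 1 ∧
        r - k ≤ pathHeight G ov oe (p.concat h) := by
  classical
  obtain ⟨hpath, hchain⟩ := hmono
  have hnn : ¬ p.reverse.Nil := by
    rw [SimpleGraph.Walk.not_nil_iff_lt_length]
    simp [hlen]
    omega
  obtain ⟨w, hyw, q, hq⟩ := SimpleGraph.Walk.not_nil_iff.mp hnn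
  have hle : p.edges.getLast? = some s(y, w) := by
    have h1 : p.reverse.edges = s(y, w) :: q.edges := by rw [hq]; simp
    rw [SimpleGraph.Walk.edges_reverse] at h1
    rw [← List.head?_reverse, h1]
    rfl
  set e := s(y, w) with hedef
  have hht' : edgeHeight G ov oe e = r := by
    rw [pathHeight, hle] at hht
    simpa using hht
  have hw_mem : w ∈ p.support := by
    have hw1 : w ∈ p.reverse.support := by
      rw [hq, SimpleGraph.Walk.support_cons]
      exact List.mem_cons_of_mem _ q.start_mem_support
    rwa [SimpleGraph.Walk.support_reverse, List.mem_reverse] at hw1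
  have hyne : y ≠ w := hyw.ne
  have hye : y ∈ e := by rw [hedef]; simp
  have hee : e ∈ G.edgeSet := by rw [hedef]; exact hyw
  obtain ⟨u, hu⟩ := exists_heightTable_of_edgeHeight G oe ov hht' (by omega)
  have hrN : r ≤ Fintype.card (Sym2 V) := (mem_cellList.mp (tableAux_mem_list G oe hu)).2
  have hcell : ∀ i ∈ Finset.Icc (r - k) (r - 1),
      ∃ f, heightTable G ov oe (i, y) = some f ∧ oe.lt e f := by
    intro i hi
    rw [Finset.mem_Icc] at hi
    have hmem : ((i : ℕ), y) ∈ cellList ov (Fintype.card (Sym2 V)) :=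
      mem_cellList.mpr ⟨by omega, by omega⟩
    exact tableAux_lt G oe (cellList_pairwise ov _) hu hmem (by simp; omega) hye
  set F : ℕ → Sym2 V := fun i => (heightTable G ov oe (i, y)).getD e with hF
  have hfs : ∀ i ∈ Finset.Icc (r - k) (r - 1),
      heightTable G ov oe (i, y) = some (F i) ∧ oe.lt e (F i) := by
    intro i hi
    obtain ⟨f, hf, hef⟩ := hcell i hi
    have hFi : F i = f := by rw [hF]; simp [hf]
    rw [hFi]
    exact ⟨hf, hef⟩
  have hht_F : ∀ i ∈ Finset.Icc (r - k) (r - 1), edgeHeight G ov oe (F i) = i :=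
    fun i hi => edgeHeight_eq G oe ov (hfs i hi).1
  have hFinj : ∀ i ∈ Finset.Icc (r - k) (r - 1), ∀ j ∈ Finset.Icc (r - k) (r - 1),
      F i = F j → i = j := by
    intro i hi j hj hij
    rw [← hht_F i hi, ← hht_F j hj, hij]
  -- counting
  set T : Finset V := (p.support.toFinset.erase y).erase w with hT
  have hcardT : T.card = k - 1 := by
    have hnodup := hpath.support_nodup
    have h1 : p.support.toFinset.card = k + 1 := by
      rw [List.toFinset_card_of_nodup hnodup, SimpleGraph.Walk.length_support, hlen]
    have hy : y ∈ p.support.toFinset := by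
      rw [List.mem_toFinset]; exact p.end_mem_support
    have hw : w ∈ p.support.toFinset.erase y := by
      rw [Finset.mem_erase]
      exact ⟨fun h => hyne h.symm, List.mem_toFinset.mpr hw_mem⟩
    rw [hT, Finset.card_erase_of_mem hw, Finset.card_erase_of_mem hy, h1]
    omega
  set bad : ℕ → Prop := fun i => ∃ v ∈ p.support, v ≠ y ∧ F i = s(y, v) with hbad
  set B := (Finset.Icc (r - k) (r - 1)).filter bad with hB
  set g : ℕ → V := fun i => if h : bad i then h.choose else y with hg
  have hgmap : ∀ i ∈ B, g i ∈ T := by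
    intro i hi
    rw [hB, Finset.mem_filter] at hi
    obtain ⟨hi1, hi2⟩ := hi
    have hgspec := hi2.choose_spec
    have hgi : g i = hi2.choose := by rw [hg]; simp [hi2]
    obtain ⟨hv1, hv2, hv3⟩ := hgspec
    rw [hT, Finset.mem_erase, Finset.mem_erase, hgi]
    refine ⟨?_, hv2, List.mem_toFinset.mpr hv1⟩
    intro hvw
    have : F i = e := by rw [hv3, hvw, hedef]
    have hlt := (hfs i hi1).2
    rw [this] at hlt
    exact @lt_irrefl _ oe.toPreorder _ hlt
  have hginj : ∀ i ∈ B, ∀ j ∈ B, g i = g j → i = j := by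
    intro i hi j hj hgij
    rw [hB, Finset.mem_filter] at hi hj
    obtain ⟨hi1, hi2⟩ := hi
    obtain ⟨hj1, hj2⟩ := hj
    have hgi : g i = hi2.choose := by rw [hg]; simp [hi2]
    have hgj : g j = hj2.choose := by rw [hg]; simp [hj2]
    have h3 := hi2.choose_spec.2.2
    have h4 := hj2.choose_spec.2.2
    refine hFinj i hi1 j hj1 ?_
    rw [h3, h4, ← hgi, ← hgj, hgij]
  have hBcard : B.card ≤ k - 1 := by
    rw [← hcardT]
    exact Finset.card_le_card_of_injOn g hgmap hginj
  have hIcc : (Finset.Icc (r - k) (r - 1)).card = k := by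
    rw [Nat.card_Icc]
    omega
  obtain ⟨i, hi, hnotbad⟩ : ∃ i ∈ Finset.Icc (r - k) (r - 1), ¬ bad i := by
    by_contra hcon
    push_neg at hcon
    have hsub : Finset.Icc (r - k) (r - 1) ⊆ B := by
      intro i hi
      rw [hB, Finset.mem_filter]
      exact ⟨hi, hcon i hi⟩
    have := Finset.card_le_card hsub
    omega
  -- good i
  obtain ⟨hcelli, hlti⟩ := hfs i hi
  have hFmem : F i ∈ G.edgeSet ∧ y ∈ F i := tableAux_mem G oe hcelli
  set z := Sym2.Mem.other hFmem.2 with hz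
  have hspec : s(y, z) = F i := Sym2.other_spec hFmem.2
  have hadj : G.Adj y z := by
    rw [← SimpleGraph.mem_edgeSet, hspec]
    exact hFmem.1
  have hznotin : z ∉ p.support := by
    intro hzin
    exact hnotbad ⟨z, hzin, fun h => hadj.ne' h, hspec.symm⟩
  refine ⟨z, hadj, ⟨?_, ?_⟩, by simp [hlen], ?_⟩
  · rw [← SimpleGraph.Walk.isPath_reverse_iff, SimpleGraph.Walk.reverse_concat,
      SimpleGraph.Walk.cons_isPath_iff]
    refine ⟨(SimpleGraph.Walk.isPath_reverse_iff p).mpr hpath, ?_⟩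
    rwa [SimpleGraph.Walk.support_reverse, List.mem_reverse]
  · rw [SimpleGraph.Walk.edges_concat, List.concat_eq_append]
    unfold List.Chain'
    rw [List.isChain_append]
    refine ⟨hchain, List.isChain_singleton _, ?_⟩
    intro a ha b hb
    rw [hle] at ha
    simp only [Option.mem_def, Option.some.injEq] at ha
    simp only [List.head?_cons, Option.mem_def, Option.some.injEq] at hb
    rw [← ha, ← hb, hspec]
    exact hlti
  · have hlast : (p.concat hadj).edges.getLast? = some s(y, z) := by
      rw [SimpleGraph.Walk.edges_concat]
      simp [List.concat_eq_append]
    rw [pathHeight, hlast]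
    simp only [Option.map_some, Option.getD_some]
    rw [hspec, hht_F i hi]
    exact (Finset.mem_Icc.mp hi).1


end Aux

/-- Lemma 1 of the paper.  In a totally ordered graph `(G, ov, oe)`,
for `1 ≤ k < r`, each monotone path of length `k` and height `r` extends (by appending
one vertex at its final endpoint) to a monotone path of length `k + 1` and height at
least `r - k`. -/
theorem monotone_path_extension {V : Type*} [Fintype V] (G : SimpleGraph V)
    (ov : LinearOrder V) (oe : LinearOrder (Sym2 V)) {x y : V} (p : G.Walk x y)
    (k r : ℕ) (hk : 1 ≤ k) (hkr : k < r)
    (hmono : IsMonotonePath G oe p) (hlen : p.length = k)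
    (hht : pathHeight G ov oe p = r) :
    ∃ (z : V) (h : G.Adj y z),
      IsMonotonePath G oe (p.concat h) ∧ (p.concat h).length = k + 1 ∧
        r - k ≤ pathHeight G ov oe (p.concat h) := by
  exact monotone_path_extension' G oe ov p k r hk hkr hmono hlen hht

end AltitudePaper
end

section
/- In any token game with m tokens and at most 2^ℓ transfer steps (ℓ ≥ 0), every column gains a net of at most 1 + 2ℓ⌈√(2m)⌉ tokens; that is, if a column contains a tokens in the first array of the transcript and b tokens in the last array, then b − a ≤ 1 + 2ℓ⌈√(2m)⌉. -/
namespace AltitudePaper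

/-- The contents of one column after its ungrounded tokens each shift down one cell.
A column is a set of occupied rows; its grounded tokens are the initial segment
`[0, sInf Tᶜ)`, which stay put, and every ungrounded token moves down one row. -/
def shiftDown (T : Set ℕ) : Set ℕ :=
  {i | i ∈ T ∧ i < sInf Tᶜ} ∪ {i | sInf Tᶜ ≤ i ∧ i + 1 ∈ T}

/-- A token game (together with a play of it).  `board t` is the array `B_t` (for
`0 ≤ t ≤ len`): each column (indexed by `Fin n`) is the set of rows occupied by
tokens.  `active t` is the active column at step `t`, advancing cyclically.  `move t`
records the player's optional move at step `t`: `some (v, i, i')` means the highest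
grounded token of the active column, in row `i`, is moved to the empty cell in
row `i' ≤ i` of column `v` (allowed only if no earlier step moved a token between
these two columns); afterwards the ungrounded tokens of the active column shift down
one cell. -/
structure TokenGame (n : ℕ) where
  /-- number of steps -/
  len : ℕ
  /-- the array after `t` steps: each column is the set of rows occupied by tokens -/
  board : ℕ → Fin n → Set ℕ
  /-- the active column at each step -/
  active : ℕ → Fin n
  /-- the optional move at each step: target column, source row, target row -/
  move : ℕ → Option (Fin n × ℕ × ℕ)
  /-- the active column advances cyclically -/
  active_succ : ∀ t, (active (t + 1)).val = ((active t).val + 1) % n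
  /-- a step with no token moved: the ungrounded tokens of the active column shift
  down one cell -/
  step_none : ∀ t < len, move t = none →
    ∀ w, board (t + 1) w =
      if w = active t then shiftDown (board t (active t)) else board t w
  /-- a step moving a token: the token moved is the highest grounded token of the
  active column, it moves to an empty cell in a weakly lower row of another column,
  no earlier step moved a token between these two columns, and then the ungrounded
  tokens of the active column shift down one cell -/
  step_some : ∀ t < len, ∀ v i i', move t = some (v, i, i') →
    v ≠ active t ∧
    (∀ j ≤ i, j ∈ board t (active t)) ∧ i + 1 ∉ board t (active t) ∧
    i' ≤ i ∧ i' ∉ board t v ∧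
    (∀ t' < t, ∀ v' i₀ i₀', move t' = some (v', i₀, i₀') →
      ¬((active t' = active t ∧ v' = v) ∨ (active t' = v ∧ v' = active t))) ∧
    (∀ w, board (t + 1) w =
      if w = active t then shiftDown (board t (active t) \ {i})
      else if w = v then insert i' (board t v) else board t w)

/-- The number of transfer steps (steps moving a token between two columns) of a
token game. -/
def transferCount {n : ℕ} (g : TokenGame n) : ℕ :=
  ((Finset.range g.len).filter fun t => (g.move t).isSome).card

/-- The number of transfer steps among steps `t₁ ≤ t < t₂` of a token game;
these are the transfer steps of the subgame with transcript `B_{t₁}, …, B_{t₂}`. -/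
def transferCountBetween {n : ℕ} (g : TokenGame n) (t₁ t₂ : ℕ) : ℕ :=
  ((Finset.Ico t₁ t₂).filter fun t => (g.move t).isSome).card

/-- `ĝ(n, s)`: the maximum number of tokens that can be placed in a single column in
an `(n,s)`-token game (a token game with `n` columns, each initially containing at
most `s` tokens). -/
noncomputable def ghat (n s : ℕ) : ℕ :=
  sSup {k | ∃ g : TokenGame n, (∀ u, (g.board 0 u).Finite) ∧
    (∀ u, (g.board 0 u).ncard ≤ s) ∧ ∃ t ≤ g.len, ∃ u, k = (g.board t u).ncard}



/-! ### Auxiliary lemmas -/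

set_option linter.unusedSectionVars false

private def phi (s : ℕ) : ℕ → ℕ := fun i => if i < s then i else i + 1

lemma phi_inj (s : ℕ) : Function.Injective (phi s) := by
  intro a b hab
  unfold phi at hab
  split_ifs at hab <;> omega

lemma sInf_compl_mem {T : Set ℕ} (hT : T.Finite) : sInf Tᶜ ∈ Tᶜ := by
  apply Nat.sInf_mem
  exact hT.infinite_compl.nonempty

lemma phi_image_shiftDown {T : Set ℕ} (hT : T.Finite) :
    phi (sInf Tᶜ) '' shiftDown T = T := by
  have hs : sInf Tᶜ ∉ T := sInf_compl_mem hT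
  ext x
  constructor
  · rintro ⟨i, hi, rfl⟩
    rcases hi with ⟨hiT, hlt⟩ | ⟨hge, hT1⟩
    · simpa [phi, hlt] using hiT
    · have h' : ¬ i < sInf Tᶜ := not_lt.2 hge
      simpa [phi, h'] using hT1
  · intro hx
    rcases lt_trichotomy x (sInf Tᶜ) with h | h | h
    · exact ⟨x, Or.inl ⟨hx, h⟩, by simp [phi, h]⟩
    · exact absurd (h ▸ hx) hs
    · refine ⟨x - 1, Or.inr ⟨by omega, ?_⟩, ?_⟩
      · have : x - 1 + 1 = x := by omega
        rw [this]; exact hx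
      · show (if x - 1 < sInf Tᶜ then x - 1 else x - 1 + 1) = x
        rw [if_neg (by omega)]; omega

lemma shiftDown_finite {T : Set ℕ} (hT : T.Finite) : (shiftDown T).Finite := by
  have h1 : shiftDown T ⊆ phi (sInf Tᶜ) ⁻¹' T := by
    intro i hi
    have : phi (sInf Tᶜ) i ∈ phi (sInf Tᶜ) '' shiftDown T := ⟨i, hi, rfl⟩
    rw [phi_image_shiftDown hT] at this
    exact this
  exact (hT.preimage (phi_inj _).injOn).subset h1

lemma shiftDown_ncard {T : Set ℕ} (hT : T.Finite) : (shiftDown T).ncard = T.ncard := by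
  conv_rhs => rw [← phi_image_shiftDown hT]
  rw [Set.ncard_image_of_injective _ (phi_inj _)]

lemma shiftDown_hi {T : Set ℕ} (hT : T.Finite) (R : ℕ) :
    ((shiftDown T) ∩ Set.Ici R).ncard ≤ (T ∩ Set.Ici R).ncard := by
  have himg : phi (sInf Tᶜ) '' (shiftDown T ∩ Set.Ici R) ⊆ T ∩ Set.Ici R := by
    rintro x ⟨i, ⟨hi, hiR⟩, rfl⟩
    rcases hi with ⟨hiT, hlt⟩ | ⟨hge, hT1⟩
    · exact ⟨by simpa [phi, hlt] using hiT, by simpa [phi, hlt] using hiR⟩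
    · have h' : ¬ i < sInf Tᶜ := not_lt.2 hge
      refine ⟨by simpa [phi, h'] using hT1, ?_⟩
      simp only [phi, if_neg h']
      simp only [Set.mem_Ici] at hiR ⊢; omega
  calc (shiftDown T ∩ Set.Ici R).ncard
      = (phi (sInf Tᶜ) '' (shiftDown T ∩ Set.Ici R)).ncard :=
        (Set.ncard_image_of_injective _ (phi_inj _)).symm
    _ ≤ (T ∩ Set.Ici R).ncard := Set.ncard_le_ncard himg (hT.inter_of_left _)


section Game

variable {n : ℕ} (g : TokenGame n) (hfin : ∀ u, (g.board 0 u).Finite)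

include hfin

lemma board_finite : ∀ t, t ≤ g.len → ∀ u, (g.board t u).Finite := by
  intro t
  induction t with
  | zero => intro _ u; exact hfin u
  | succ t ih =>
    intro ht u
    have ht' : t < g.len := ht
    have iht := ih (le_of_lt ht')
    cases hmv : g.move t with
    | none =>
      rw [g.step_none t ht' hmv u]
      split_ifs
      · exact shiftDown_finite (iht _)
      · exact iht u
    | some p =>
      obtain ⟨v, i, i'⟩ := p
      obtain ⟨h1, h2, h3, h4, h5, h6, h7⟩ := g.step_some t ht' v i i' hmv
      rw [h7 u]
      split_ifs
      · exact shiftDown_finite ((iht _).diff)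
      · exact (iht v).insert _
      · exact iht u

/-- card change at a transfer step -/
lemma step_card_some {t : ℕ} (ht : t < g.len) {v : Fin n} {i i' : ℕ}
    (hmv : g.move t = some (v, i, i')) (u : Fin n) :
    ((g.board (t+1) u).ncard : ℤ) = ((g.board t u).ncard : ℤ)
      + (if u = v then 1 else 0) - (if u = g.active t then 1 else 0) := by
  obtain ⟨h1, h2, h3, h4, h5, h6, h7⟩ := g.step_some t ht v i i' hmv
  have hfin' := board_finite g hfin t (le_of_lt ht)
  rw [h7 u]
  by_cases hu1 : u = g.active t
  · have hu2 : u ≠ v := fun h => h1 ((h ▸ hu1).symm : g.active t = v).symm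
    rw [if_pos hu1, if_pos hu1, if_neg (fun h => hu2 h)]
    have hi : i ∈ g.board t (g.active t) := h2 i le_rfl
    have hne : (g.board t (g.active t)).Nonempty := ⟨i, hi⟩
    have h1le : 1 ≤ (g.board t (g.active t)).ncard :=
      (Set.ncard_pos (hfin' _)).2 hne
    subst hu1
    rw [shiftDown_ncard ((hfin' _).diff),
      Set.ncard_diff_singleton_of_mem hi]
    push_cast [Nat.cast_sub h1le]
    ring
  · rw [if_neg hu1, if_neg hu1]
    by_cases hu2 : u = v
    · subst hu2
      rw [if_pos rfl, if_pos rfl, Set.ncard_insert_of_notMem h5 (hfin' _)]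
      push_cast; ring
    · rw [if_neg hu2, if_neg hu2]; ring

lemma step_card_none {t : ℕ} (ht : t < g.len) (hmv : g.move t = none) (u : Fin n) :
    (g.board (t+1) u).ncard = (g.board t u).ncard := by
  have hfin' := board_finite g hfin t (le_of_lt ht)
  rw [g.step_none t ht hmv u]
  split_ifs with h
  · subst h; exact shiftDown_ncard (hfin' _)
  · rfl

/-- conservation of total token count -/
lemma sum_card (m : ℕ) (hm : (∑ u : Fin n, (g.board 0 u).ncard) = m) :
    ∀ t, t ≤ g.len → (∑ u : Fin n, ((g.board t u).ncard : ℤ)) = m := by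
  intro t
  induction t with
  | zero => intro _; rw [← hm]; push_cast; rfl
  | succ t ih =>
    intro ht
    have ht' : t < g.len := ht
    rw [← ih (le_of_lt ht')]
    cases hmv : g.move t with
    | none =>
      exact Finset.sum_congr rfl fun u _ => by rw [step_card_none g hfin ht' hmv u]
    | some p =>
      obtain ⟨v, i, i'⟩ := p
      have : ∀ u ∈ Finset.univ, ((g.board (t+1) u).ncard : ℤ) =
          ((g.board t u).ncard : ℤ) + (if u = v then 1 else 0)
            - (if u = g.active t then 1 else 0) :=
        fun u _ => step_card_some g hfin ht' hmv u
      rw [Finset.sum_congr rfl this]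
      simp [Finset.sum_add_distrib, Finset.sum_sub_distrib, Finset.sum_ite_eq']


/-- whether the move is an insertion into column `c` at a row `≥ R` -/
def isHigh (c : Fin n) (R : ℕ) : Option (Fin n × ℕ × ℕ) → Bool
  | some (v, _, i') => decide (v = c ∧ R ≤ i')
  | none => false

lemma step_hi {t : ℕ} (ht : t < g.len) (c : Fin n) (R : ℕ) :
    (g.board (t+1) c ∩ Set.Ici R).ncard ≤ (g.board t c ∩ Set.Ici R).ncard
      + (if isHigh c R (g.move t) then 1 else 0) := by
  have hfin' := board_finite g hfin t (le_of_lt ht)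
  cases hmv : g.move t with
  | none =>
    rw [g.step_none t ht hmv c]
    refine le_trans ?_ (Nat.le_add_right _ _)
    split_ifs with h
    · subst h; exact shiftDown_hi (hfin' _) R
    · exact le_rfl
  | some p =>
    obtain ⟨v, i, i'⟩ := p
    obtain ⟨h1, h2, h3, h4, h5, h6, h7⟩ := g.step_some t ht v i i' hmv
    rw [h7 c]
    by_cases hc1 : c = g.active t
    · rw [if_pos hc1]
      refine le_trans ?_ (Nat.le_add_right _ _)
      subst hc1
      refine le_trans (shiftDown_hi ((hfin' _).diff) R) ?_
      exact Set.ncard_le_ncard (Set.inter_subset_inter_left _ Set.diff_subset)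
        ((hfin' _).inter_of_left _)
    · rw [if_neg hc1]
      by_cases hc2 : c = v
      · subst hc2
        rw [if_pos rfl]
        by_cases hR : R ≤ i'
        · have hhi : isHigh c R (some (c, i, i')) = true := by
            simp [isHigh, hR]
          rw [hhi, if_pos rfl]
          have hsub : insert i' (g.board t c) ∩ Set.Ici R ⊆ insert i' (g.board t c ∩ Set.Ici R) := by
            rintro j ⟨hj1, hj2⟩
            rcases hj1 with rfl | hj1
            · exact Set.mem_insert _ _
            · exact Set.mem_insert_of_mem _ ⟨hj1, hj2⟩
          exact le_trans (Set.ncard_le_ncard hsub (((hfin' c).inter_of_left _).insert _))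
            (Set.ncard_insert_le _ _)
        · have heq : insert i' (g.board t c) ∩ Set.Ici R = g.board t c ∩ Set.Ici R := by
            ext j
            constructor
            · rintro ⟨hj1, hj2⟩
              rcases hj1 with rfl | hj1
              · exact absurd hj2 (by simpa using hR)
              · exact ⟨hj1, hj2⟩
            · rintro ⟨hj1, hj2⟩
              exact ⟨Set.mem_insert_of_mem _ hj1, hj2⟩
          rw [heq]
          exact Nat.le_add_right _ _
      · rw [if_neg hc2]
        exact Nat.le_add_right _ _

lemma hi_interval (c : Fin n) (R : ℕ) (t₁ t₂ : ℕ) (h12 : t₁ ≤ t₂) (h2l : t₂ ≤ g.len) :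
    (g.board t₂ c ∩ Set.Ici R).ncard ≤ (g.board t₁ c ∩ Set.Ici R).ncard
      + ((Finset.Ico t₁ t₂).filter (fun t => isHigh c R (g.move t))).card := by
  induction t₂, h12 using Nat.le_induction with
  | base => simp
  | succ t₂ h12 ih =>
    have ht2 : t₂ < g.len := h2l
    have hstep := step_hi g hfin ht2 c R
    have hcard : ((Finset.Ico t₁ (t₂+1)).filter (fun t => isHigh c R (g.move t))).card
        = ((Finset.Ico t₁ t₂).filter (fun t => isHigh c R (g.move t))).card
          + (if isHigh c R (g.move t₂) then 1 else 0) := by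
      rw [Nat.Ico_succ_right_eq_insert_Ico h12, Finset.filter_insert]
      split_ifs
      · rw [Finset.card_insert_of_notMem (by simp)]
      · rfl
    rw [hcard]
    have := ih (le_of_lt ht2)
    omega

omit hfin in
lemma tcb_succ (t₁ t₂ : ℕ) (h12 : t₁ ≤ t₂) :
    transferCountBetween g t₁ (t₂+1) = transferCountBetween g t₁ t₂
      + (if (g.move t₂).isSome then 1 else 0) := by
  unfold transferCountBetween
  rw [Nat.Ico_succ_right_eq_insert_Ico h12, Finset.filter_insert]
  split_ifs
  · rw [Finset.card_insert_of_notMem (by simp)]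
  · rfl

lemma card_interval (u : Fin n) (t₁ t₂ : ℕ) (h12 : t₁ ≤ t₂) (h2l : t₂ ≤ g.len) :
    ((g.board t₂ u).ncard : ℤ) ≤ ((g.board t₁ u).ncard : ℤ)
      + transferCountBetween g t₁ t₂ := by
  induction t₂, h12 using Nat.le_induction with
  | base => simp [transferCountBetween]
  | succ t₂ h12 ih =>
    have ht2 : t₂ < g.len := h2l
    have ih' := ih (le_of_lt ht2)
    rw [tcb_succ g t₁ t₂ h12]
    cases hmv : g.move t₂ with
    | none =>
      rw [step_card_none g hfin ht2 hmv u]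
      simpa using ih'
    | some p =>
      obtain ⟨v, i, i'⟩ := p
      have := step_card_some g hfin ht2 hmv u
      rw [this]
      simp only [Option.isSome_some, if_true]
      push_cast
      split_ifs <;> omega


omit hfin in
lemma tcb_mono_right (t₁ : ℕ) {t t' : ℕ} (h : t ≤ t') :
    transferCountBetween g t₁ t ≤ transferCountBetween g t₁ t' :=
  Finset.card_le_card (Finset.filter_subset_filter _ (Finset.Ico_subset_Ico le_rfl h))

omit hfin in
lemma tcb_mono_left {t₁ t₁' : ℕ} (t : ℕ) (h : t₁ ≤ t₁') :
    transferCountBetween g t₁' t ≤ transferCountBetween g t₁ t :=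
  Finset.card_le_card (Finset.filter_subset_filter _ (Finset.Ico_subset_Ico h le_rfl))

omit hfin in
lemma tcb_add {t₁ t₂ t₃ : ℕ} (h12 : t₁ ≤ t₂) (h23 : t₂ ≤ t₃) :
    transferCountBetween g t₁ t₂ + transferCountBetween g t₂ t₃
      = transferCountBetween g t₁ t₃ := by
  unfold transferCountBetween
  have hd : Disjoint ((Finset.Ico t₁ t₂).filter fun t => (g.move t).isSome)
      ((Finset.Ico t₂ t₃).filter fun t => (g.move t).isSome) :=
    Finset.disjoint_filter_filter (Finset.Ico_disjoint_Ico_consecutive t₁ t₂ t₃)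
  rw [← Finset.card_union_of_disjoint hd, ← Finset.filter_union,
    Finset.Ico_union_Ico_eq_Ico h12 h23]

omit hfin in
lemma exists_median {t₁ t₂ : ℕ} (h12 : t₁ ≤ t₂) (k : ℕ)
    (h : transferCountBetween g t₁ t₂ ≤ 2^(k+1)) :
    ∃ ts, t₁ ≤ ts ∧ ts ≤ t₂ ∧ transferCountBetween g t₁ ts ≤ 2^k ∧
      transferCountBetween g ts t₂ ≤ 2^k := by
  classical
  by_cases hs : transferCountBetween g t₁ t₂ ≤ 2^k
  · exact ⟨t₁, le_rfl, h12, by simp [transferCountBetween], hs⟩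
  push_neg at hs
  set P : ℕ → Prop := fun t => t₁ ≤ t ∧ transferCountBetween g t₁ t ≤ 2^k with hP
  have hPt1 : P t₁ := ⟨le_rfl, by simp [transferCountBetween]⟩
  set ts := Nat.findGreatest P t₂ with hts
  have h1 : P ts := Nat.findGreatest_spec h12 hPt1
  have h2 : ts ≤ t₂ := Nat.findGreatest_le t₂
  have hlt : ts < t₂ := by
    rcases lt_or_eq_of_le h2 with h' | h'
    · exact h'
    · exact absurd (h' ▸ h1.2) (not_le.2 hs)
  refine ⟨ts, h1.1, h2, h1.2, ?_⟩
  have hnot : ¬ P (ts + 1) :=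
    Nat.findGreatest_is_greatest (Nat.lt_succ_self ts) hlt
  have hgt : 2^k < transferCountBetween g t₁ (ts+1) := by
    by_contra hcon
    exact hnot ⟨le_trans h1.1 (Nat.le_succ ts), not_lt.1 hcon⟩
  have hsucc := tcb_succ g t₁ ts h1.1
  have hts1 : 2^k ≤ transferCountBetween g t₁ ts := by
    split_ifs at hsucc <;> omega
  have hadd := tcb_add g h1.1 (le_of_lt hlt)
  have hpow : (2:ℕ)^(k+1) = 2^k + 2^k := by rw [pow_succ]; ring
  omega

lemma tall_card (m : ℕ) (hm : (∑ u : Fin n, (g.board 0 u).ncard) = m)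
    (q : ℕ) {τ : ℕ} (hτ : τ ≤ g.len) :
    ((Finset.univ.filter (fun u : Fin n => q ≤ (g.board τ u).ncard)).card) * q ≤ m := by
  classical
  have hsum : (∑ u : Fin n, ((g.board τ u).ncard : ℤ)) = m := sum_card g hfin m hm τ hτ
  have hsumn : (∑ u : Fin n, (g.board τ u).ncard) = m := by exact_mod_cast hsum
  calc (Finset.univ.filter (fun u : Fin n => q ≤ (g.board τ u).ncard)).card * q
      = ∑ u ∈ Finset.univ.filter (fun u : Fin n => q ≤ (g.board τ u).ncard), q := by
        rw [Finset.sum_const, smul_eq_mul]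
    _ ≤ ∑ u ∈ Finset.univ.filter (fun u : Fin n => q ≤ (g.board τ u).ncard),
          (g.board τ u).ncard :=
        Finset.sum_le_sum fun u hu => (Finset.mem_filter.1 hu).2
    _ ≤ ∑ u : Fin n, (g.board τ u).ncard :=
        Finset.sum_le_sum_of_subset (Finset.filter_subset _ _)
    _ = m := hsumn

omit hfin in
lemma ncard_split (T : Set ℕ) (hT : T.Finite) (R : ℕ) :
    T.ncard ≤ R + (T ∩ Set.Ici R).ncard := by
  have hunion : T = (T ∩ Set.Iio R) ∪ (T ∩ Set.Ici R) := by
    ext j; by_cases hj : j < R <;> simp [Set.mem_inter_iff, hj, not_lt.1, *] <;> omega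
  have h1 : (T ∩ Set.Iio R).ncard ≤ R := by
    have h0 : (Set.Iio R).ncard = R := by
      rw [← Finset.coe_Iio, Set.ncard_coe_finset, Nat.card_Iio]
    have : (T ∩ Set.Iio R).ncard ≤ (Set.Iio R).ncard :=
      Set.ncard_le_ncard Set.inter_subset_right (Set.finite_Iio R)
    omega
  calc T.ncard = ((T ∩ Set.Iio R) ∪ (T ∩ Set.Ici R)).ncard := by rw [← hunion]
    _ ≤ (T ∩ Set.Iio R).ncard + (T ∩ Set.Ici R).ncard := Set.ncard_union_le _ _
    _ ≤ R + (T ∩ Set.Ici R).ncard := by omega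

lemma main_bound (m : ℕ) (hm : (∑ u : Fin n, (g.board 0 u).ncard) = m)
    (q : ℕ) (hq : 2*m ≤ q*q) :
    ∀ ℓ : ℕ, ∀ t₁ t₂, t₁ ≤ t₂ → t₂ ≤ g.len → transferCountBetween g t₁ t₂ ≤ 2^ℓ →
      ∀ u, ((g.board t₂ u).ncard : ℤ) ≤ ((g.board t₁ u).ncard : ℤ) + (1 + 2*(ℓ:ℤ)*q) := by
  classical
  intro ℓ
  induction ℓ with
  | zero =>
    intro t₁ t₂ h12 h2l htr u
    have h1 := card_interval g hfin u t₁ t₂ h12 h2l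
    have h2 : (transferCountBetween g t₁ t₂ : ℤ) ≤ 1 := by
      exact_mod_cast htr
    push_cast
    linarith
  | succ k ih =>
    intro t₁ t₂ h12 h2l htr u
    by_cases hq0 : q = 0
    · have hm0 : m = 0 := by rw [hq0] at hq; omega
      have hsum : (∑ w : Fin n, ((g.board t₂ w).ncard : ℤ)) = m := sum_card g hfin m hm t₂ h2l
      have hle : ((g.board t₂ u).ncard : ℤ) ≤ ∑ w : Fin n, ((g.board t₂ w).ncard : ℤ) :=
        Finset.single_le_sum (f := fun w : Fin n => ((g.board t₂ w).ncard : ℤ))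
          (fun w _ => by positivity) (Finset.mem_univ u)
      rw [hsum] at hle
      have hle2 : ((g.board t₂ u).ncard : ℤ) ≤ 0 := by
        rw [hm0] at hle; exact_mod_cast hle
      have h0 : (0:ℤ) ≤ ((g.board t₁ u).ncard : ℤ) := by positivity
      have hqz : (q:ℤ) = 0 := by exact_mod_cast hq0
      rw [hqz]
      linarith
    have hqpos : 1 ≤ q := Nat.one_le_iff_ne_zero.2 hq0
    obtain ⟨ts, hts1, hts2, htsa, htsb⟩ := exists_median g h12 k htr
    set R : ℕ := (2*k+1)*q with hR
    set Hset := (Finset.Ico t₁ t₂).filter (fun t => isHigh u R (g.move t)) with hHset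
    set Tall1 := Finset.univ.filter (fun w : Fin n => q ≤ (g.board t₁ w).ncard) with hT1
    set Tall2 := Finset.univ.filter (fun w : Fin n => q ≤ (g.board ts w).ncard) with hT2
    -- each high insertion has a tall source
    have hsrc : ∀ t ∈ Hset, g.active t ∈ Tall1 ∪ Tall2 := by
      intro t htH
      rw [hHset, Finset.mem_filter] at htH
      obtain ⟨htIco, htHigh⟩ := htH
      rw [Finset.mem_Ico] at htIco
      have htlen : t < g.len := lt_of_lt_of_le htIco.2 h2l
      -- decode the move
      obtain ⟨i, i', hmv, hRi⟩ : ∃ i i', g.move t = some (u, i, i') ∧ R ≤ i' := by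
        cases hmv : g.move t with
        | none => rw [hmv] at htHigh; simp [isHigh] at htHigh
        | some p =>
          obtain ⟨v, i, i'⟩ := p
          rw [hmv] at htHigh
          simp only [isHigh, decide_eq_true_eq] at htHigh
          exact ⟨i, i', by rw [htHigh.1], htHigh.2⟩
      obtain ⟨h1, h2, h3, h4, h5, h6, h7⟩ := g.step_some t htlen u i i' hmv
      have hground : Set.Iic i ⊆ g.board t (g.active t) := fun j hj => h2 j hj
      have hfint := board_finite g hfin t (le_of_lt htlen)
      have hbig : R + 1 ≤ (g.board t (g.active t)).ncard := by
        have hIic : (Set.Iic i).ncard = i + 1 := by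
          rw [← Finset.coe_Iic, Set.ncard_coe_finset, Nat.card_Iic]
        have := Set.ncard_le_ncard hground (hfint _)
        omega
      -- apply the induction hypothesis on the appropriate interval
      by_cases hcase : t < ts
      · have htcb : transferCountBetween g t₁ t ≤ 2^k :=
          le_trans (tcb_mono_right g t₁ (le_of_lt hcase)) htsa
        have hih := ih t₁ t htIco.1 (le_of_lt htlen) htcb (g.active t)
        have : (q : ℤ) ≤ ((g.board t₁ (g.active t)).ncard : ℤ) := by
          have hRz : (R : ℤ) = 2*((k:ℤ)*q) + q := by push_cast [hR]; ring
          have hb : (R:ℤ) + 1 ≤ ((g.board t (g.active t)).ncard : ℤ) := by exact_mod_cast hbig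
          linarith [hih, hb, hRz]
        refine Finset.mem_union_left _ ?_
        rw [hT1, Finset.mem_filter]
        exact ⟨Finset.mem_univ _, by exact_mod_cast this⟩
      · push_neg at hcase
        have htcb : transferCountBetween g ts t ≤ 2^k :=
          le_trans (tcb_mono_right g ts (le_of_lt htIco.2)) htsb
        have hih := ih ts t hcase (le_of_lt htlen) htcb (g.active t)
        have : (q : ℤ) ≤ ((g.board ts (g.active t)).ncard : ℤ) := by
          have hb : (R:ℤ) + 1 ≤ ((g.board t (g.active t)).ncard : ℤ) := by exact_mod_cast hbig
          have hRz : (R : ℤ) = 2*((k:ℤ)*q) + q := by push_cast [hR]; ring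
          linarith [hih, hb, hRz]
        refine Finset.mem_union_right _ ?_
        rw [hT2, Finset.mem_filter]
        exact ⟨Finset.mem_univ _, by exact_mod_cast this⟩
    -- sources are pairwise distinct
    have hinj : Set.InjOn g.active Hset := by
      intro t htH t' htH' heq
      by_contra hne
      -- wlog t < t'
      have key : ∀ a b : ℕ, a ∈ Hset → b ∈ Hset → a < b → g.active a ≠ g.active b := by
        intro a b haH hbH hab
        rw [hHset, Finset.mem_filter] at haH hbH
        have halen : a < g.len := lt_of_lt_of_le (Finset.mem_Ico.1 haH.1).2 h2l
        have hblen : b < g.len := lt_of_lt_of_le (Finset.mem_Ico.1 hbH.1).2 h2l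
        obtain ⟨ia, ia', hmva, _⟩ : ∃ i i', g.move a = some (u, i, i') ∧ R ≤ i' := by
          cases hmv : g.move a with
          | none => rw [hmv] at haH; simp [isHigh] at haH
          | some p =>
            obtain ⟨v, i, i'⟩ := p
            have hx := haH.2; rw [hmv] at hx
            simp only [isHigh, decide_eq_true_eq] at hx
            exact ⟨i, i', by rw [hx.1], hx.2⟩
        obtain ⟨ib, ib', hmvb, _⟩ : ∃ i i', g.move b = some (u, i, i') ∧ R ≤ i' := by
          cases hmv : g.move b with
          | none => rw [hmv] at hbH; simp [isHigh] at hbH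
          | some p =>
            obtain ⟨v, i, i'⟩ := p
            have hx := hbH.2; rw [hmv] at hx
            simp only [isHigh, decide_eq_true_eq] at hx
            exact ⟨i, i', by rw [hx.1], hx.2⟩
        obtain ⟨_, _, _, _, _, h6, _⟩ := g.step_some b hblen u ib ib' hmvb
        have := h6 a hab u ia ia' hmva
        intro hcontra
        exact this (Or.inl ⟨hcontra, rfl⟩)
      rcases lt_trichotomy t t' with h | h | h
      · exact key t t' htH htH' h heq
      · exact hne h
      · exact key t' t htH' htH h heq.symm
    have hcard1 : Hset.card ≤ (Tall1 ∪ Tall2).card :=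
      Finset.card_le_card_of_injOn g.active hsrc hinj
    have hcard2 : Hset.card ≤ Tall1.card + Tall2.card :=
      le_trans hcard1 (Finset.card_union_le _ _)
    have htall1 : Tall1.card * q ≤ m := tall_card g hfin m hm q (le_trans h12 h2l)
    have htall2 : Tall2.card * q ≤ m := tall_card g hfin m hm q (le_trans hts2 h2l)
    have hHq : Hset.card ≤ q := by
      have h1 : Hset.card * q ≤ 2 * m := by
        calc Hset.card * q ≤ (Tall1.card + Tall2.card) * q :=
              Nat.mul_le_mul_right _ hcard2
          _ = Tall1.card * q + Tall2.card * q := by ring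
          _ ≤ m + m := Nat.add_le_add htall1 htall2
          _ = 2 * m := by ring
      have h2 : Hset.card * q ≤ q * q := le_trans h1 hq
      exact Nat.le_of_mul_le_mul_right (by omega) hqpos
    -- final chain
    have hfin2 := board_finite g hfin t₂ h2l
    have hfin1 := board_finite g hfin t₁ (le_trans h12 h2l)
    have hsplit := ncard_split (g.board t₂ u) (hfin2 u) R
    have hhi := hi_interval g hfin u R t₁ t₂ h12 h2l
    have hlow : (g.board t₁ u ∩ Set.Ici R).ncard ≤ (g.board t₁ u).ncard :=
      Set.ncard_le_ncard Set.inter_subset_left (hfin1 u)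
    have hfinal : (g.board t₂ u).ncard ≤ (g.board t₁ u).ncard + R + q := by
      have := hhi
      rw [← hHset] at this
      omega
    have hfz : ((g.board t₂ u).ncard : ℤ) ≤ ((g.board t₁ u).ncard : ℤ) + R + q := by
      exact_mod_cast hfinal
    have hRz : (R:ℤ) = 2*((k:ℤ)*q) + q := by push_cast [hR]; ring
    push_cast
    linarith [hfz, hRz]

end Game


/-- Lemma `tganal2` of the paper.  In a token game with `m` tokens
and at most `2^ℓ` transfer steps, each column gains a net of at most
`1 + 2ℓ⌈√(2m)⌉` tokens. -/
theorem tokenGame_net_gain {n : ℕ} (g : TokenGame n) (m ℓ : ℕ)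
    (hfin : ∀ u, (g.board 0 u).Finite)
    (hm : (∑ u : Fin n, (g.board 0 u).ncard) = m)
    (htr : transferCount g ≤ 2 ^ ℓ) (c : Fin n) :
    ((g.board g.len c).ncard : ℤ) - ((g.board 0 c).ncard : ℤ) ≤
      1 + 2 * ℓ * ⌈Real.sqrt (2 * m)⌉ := by
  have hceil : (0:ℤ) ≤ ⌈Real.sqrt (2*m)⌉ := Int.ceil_nonneg (Real.sqrt_nonneg _)
  set q : ℕ := (⌈Real.sqrt (2*m)⌉).toNat with hqdef
  have hqz : (q:ℤ) = ⌈Real.sqrt (2*m)⌉ := by rw [hqdef]; exact Int.toNat_of_nonneg hceil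
  have hq : 2*m ≤ q*q := by
    have h1 : Real.sqrt (2*m) ≤ (q:ℝ) := by
      calc Real.sqrt (2*m) ≤ ((⌈Real.sqrt (2*m)⌉ : ℤ) : ℝ) := Int.le_ceil _
        _ = (q:ℝ) := by rw [← hqz]; push_cast; ring
    have h2 : (2*m : ℝ) ≤ (q:ℝ)*(q:ℝ) := by
      have h0 : (0:ℝ) ≤ Real.sqrt (2*m) := Real.sqrt_nonneg _
      nlinarith [Real.mul_self_sqrt (show (0:ℝ) ≤ 2*m by positivity), h1, h0]
    exact_mod_cast h2
  have htr' : transferCountBetween g 0 g.len ≤ 2^ℓ := by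
    rw [transferCountBetween, ← Finset.range_eq_Ico]; exact htr
  have hmain := main_bound g hfin m hm q hq ℓ 0 g.len (Nat.zero_le _) le_rfl htr' c
  rw [hqz] at hmain
  linarith

end AltitudePaper
end

section
/- If G is a graph with n ≥ 1 vertices and average degree d = 2|E(G)|/n, then every edge-ordering of G contains a monotone trail of length at least d; that is, f*(G) ≥ d. -/
namespace AltitudePaper

variable {V : Type*}

/-- A monotone trail in the edge-ordered graph `(G, oe)` (where `oe` is a linear
order on edges): a walk with no repeated edges traversing its edges in increasing
order of the edge ordering. -/
def IsMonotoneTrail (G : SimpleGraph V) (oe : LinearOrder (Sym2 V)) {u v : V}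
    (p : G.Walk u v) : Prop :=
  p.IsTrail ∧ List.Chain' (fun e f => oe.lt e f) p.edges


lemma key {V : Type*} [Fintype V] (G : SimpleGraph V) (oe : LinearOrder (Sym2 V)) :
    ∀ L : List (Sym2 V), L.Pairwise (fun e f => oe.lt e f) → (∀ e ∈ L, e ∈ G.edgeSet) →
    ∃ t : ∀ v : V, (u : V) × G.Walk u v,
      (∀ v, IsMonotoneTrail G oe (t v).2 ∧ ∀ e ∈ (t v).2.edges, e ∈ L) ∧
      2 * L.length ≤ ∑ v, (t v).2.length := by
  classical
  intro L
  induction L using List.reverseRecOn with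
  | nil =>
    intro _ _
    exact ⟨fun v => ⟨v, SimpleGraph.Walk.nil⟩, by simp [IsMonotoneTrail, List.Chain'], by simp⟩
  | append_singleton L e ih =>
    induction e using Sym2.ind with
    | _ a b =>
    intro hP hE
    obtain ⟨hPL, -, hlt⟩ := List.pairwise_append.mp hP
    have hlt' : ∀ x ∈ L, oe.lt x s(a, b) := fun x hx => hlt x hx _ (by simp)
    obtain ⟨t, ht, hsum⟩ := ih hPL (fun e he => hE e (by simp [he]))
    have hab : G.Adj a b := (G.mem_edgeSet).mp (hE _ (by simp))
    have hne : a ≠ b := hab.ne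
    let t' : ∀ v : V, (u : V) × G.Walk u v :=
      Function.update (Function.update t a ⟨(t b).1, (t b).2.concat hab.symm⟩)
        b ⟨(t a).1, (t a).2.concat hab⟩
    have h'a : t' a = ⟨(t b).1, (t b).2.concat hab.symm⟩ := by
      rw [show t' a = _ from Function.update_of_ne hne _ _, Function.update_self]
    have h'b : t' b = ⟨(t a).1, (t a).2.concat hab⟩ := Function.update_self _ _ _
    have h'v : ∀ v, v ≠ a → v ≠ b → t' v = t v := by
      intro v h1 h2
      rw [show t' v = _ from Function.update_of_ne h2 _ _, Function.update_of_ne h1]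
    -- extension lemma
    have hext : ∀ (x y : V) (h : G.Adj x y), s(x, y) = s(a, b) →
        IsMonotoneTrail G oe ((t x).2.concat h) ∧
        ∀ e ∈ ((t x).2.concat h).edges, e ∈ L ++ [s(a, b)] := by
      intro x y h hxy
      obtain ⟨⟨htr, hch⟩, hmem⟩ := ht x
      have hnotin : s(x, y) ∉ (t x).2.edges := by
        intro hmem'
        have := hlt' _ (hmem _ hmem')
        rw [hxy] at this
        exact absurd this (@lt_irrefl _ oe.toPreorder _)
      constructor
      · constructor
        · rw [SimpleGraph.Walk.isTrail_def, SimpleGraph.Walk.edges_concat,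
            List.concat_eq_append, List.nodup_append]
          exact ⟨htr.edges_nodup, List.nodup_singleton _, by intro e he f hf; simp at hf; subst hf; exact fun h => hnotin (h ▸ he)⟩
        · rw [SimpleGraph.Walk.edges_concat, List.concat_eq_append, List.Chain', List.isChain_append]
          refine ⟨hch, List.isChain_singleton _, ?_⟩
          intro p hp q hq
          simp only [List.head?_cons, Option.mem_def, Option.some.injEq] at hq
          subst hq
          rw [hxy]
          exact hlt' _ (hmem _ (List.mem_of_mem_getLast? hp))
      · intro e he
        rw [SimpleGraph.Walk.edges_concat, List.concat_eq_append] at he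
        rcases List.mem_append.mp he with h' | h'
        · exact List.mem_append_left _ (hmem _ h')
        · simp only [List.mem_singleton] at h'
          subst h'
          rw [hxy]
          exact List.mem_append_right _ (by simp)
    refine ⟨t', ?_, ?_⟩
    · intro v
      by_cases h1 : v = a
      · subst h1
        rw [h'a]
        exact hext b v hab.symm Sym2.eq_swap
      · by_cases h2 : v = b
        · subst h2
          rw [h'b]
          exact hext a v hab rfl
        · rw [h'v v h1 h2]
          exact ⟨(ht v).1, fun e he => List.mem_append_left _ ((ht v).2 e he)⟩
    · have hform : ∀ g : V → ℕ, ∑ v, g v =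
          g a + (g b + ∑ v ∈ (Finset.univ.erase a).erase b, g v) := by
        intro g
        rw [← Finset.add_sum_erase _ g (Finset.mem_univ a),
          ← Finset.add_sum_erase _ g (Finset.mem_erase.mpr ⟨hne.symm, Finset.mem_univ b⟩)]
      have hga : (t' a).2.length = (t b).2.length + 1 := by
        rw [h'a]; exact SimpleGraph.Walk.length_concat _ _
      have hgb : (t' b).2.length = (t a).2.length + 1 := by
        rw [h'b]; exact SimpleGraph.Walk.length_concat _ _
      have hrest : ∑ v ∈ (Finset.univ.erase a).erase b, (t' v).2.length =
          ∑ v ∈ (Finset.univ.erase a).erase b, (t v).2.length := by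
        refine Finset.sum_congr rfl fun v hv => ?_
        have h2 : v ≠ b := (Finset.mem_erase.mp hv).1
        have h1 : v ≠ a := (Finset.mem_erase.mp (Finset.mem_erase.mp hv).2).1
        rw [h'v v h1 h2]
      rw [hform (fun v => (t' v).2.length), hga, hgb, hrest]
      rw [hform (fun v => (t v).2.length)] at hsum
      simp only [List.length_append, List.length_singleton]
      omega


/-- Graham–Kleitman; the pedestrian argument.  If `G` is a graph
with `n ≥ 1` vertices and average degree `d = 2|E(G)|/n`, then every edge-ordering of
`G` contains a monotone trail of length at least `d`; that is, `f*(G) ≥ d`. -/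
theorem monotone_trail_avg_degree {V : Type*} [Fintype V] [Nonempty V]
    (G : SimpleGraph V) (n : ℕ) (hn : Fintype.card V = n) (d : ℝ)
    (hd : d = 2 * G.edgeSet.ncard / n) (oe : LinearOrder (Sym2 V)) :
    ∃ (u v : V) (p : G.Walk u v),
      IsMonotoneTrail G oe p ∧ d ≤ (p.length : ℝ) := by
  classical
  letI := oe
  have hfin : G.edgeSet.Finite := Set.toFinite _
  set F : Finset (Sym2 V) := hfin.toFinset with hF
  set L : List (Sym2 V) := F.sort (fun a b => @LE.le _ oe.toLE a b) with hL
  have hpair : L.Pairwise (fun e f => oe.lt e f) :=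
    ((Finset.pairwise_sort F _).and (Finset.sort_nodup F _)).imp
      fun h => @lt_of_le_of_ne _ oe.toPartialOrder _ _ h.1 h.2
  have hmem : ∀ e ∈ L, e ∈ G.edgeSet := by
    intro e he
    rw [hL, Finset.mem_sort] at he
    exact hfin.mem_toFinset.mp he
  have hlen : L.length = G.edgeSet.ncard := by
    rw [hL, Finset.length_sort, hF, Set.ncard_eq_toFinset_card _ hfin]
  obtain ⟨t, ht, hsum⟩ := key G oe L hpair hmem
  have hstep : ∑ _v : V, (2 * L.length) ≤ ∑ v : V, n * (t v).2.length := by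
    rw [Finset.sum_const, ← Finset.mul_sum, Finset.card_univ, hn, smul_eq_mul]
    calc n * (2 * L.length) ≤ n * ∑ v, (t v).2.length := Nat.mul_le_mul_left _ hsum
    _ = _ := rfl
  obtain ⟨v, -, hv⟩ := Finset.exists_le_of_sum_le Finset.univ_nonempty hstep
  refine ⟨(t v).1, v, (t v).2, (ht v).1, ?_⟩
  have hn1 : 0 < n := hn ▸ Fintype.card_pos
  rw [hd, div_le_iff₀ (by exact_mod_cast hn1)]
  have : (2 * G.edgeSet.ncard : ℝ) ≤ n * (t v).2.length := by
    rw [← hlen]; exact_mod_cast hv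
  linarith [this, mul_comm (n : ℝ) ((t v).2.length : ℝ)]


end AltitudePaper
end
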